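/- An allocation M is the outcome of some balanced alternation policy if and only if M is Pareto optimal, M is balanced, M satisfies Condition 3, and the directed graph G_M contains no cycle. -/

import Mathlib

open Finset
open scoped Classical

/-- The most preferred item of a nonempty finset w.r.t. a linear order
(greater means more preferred). -/
noncomputable def favorite {ι : Type} (L : LinearOrder ι) (S : Finset ι) (h : S.Nonempty) : ι :=
  @Finset.max' ι L S h

/-- Sequential allocation: process the turns in order; at each turn the agent whose
turn it is picks her most preferred item among the items not yet allocated.
Returns the list of (agent, item) picks, in order. -/
noncomputable def seqAlloc {n : ℕ} {ι : Type} [DecidableEq ι]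
    (P : Fin n → LinearOrder ι) : List (Fin n) → Finset ι → List (Fin n × ι)
  | [], _ => []
  | a :: rest, S =>
    if h : S.Nonempty then
      (a, favorite (P a) S h) :: seqAlloc P rest (S.erase (favorite (P a) S h))
    else []

/-- `M` is the outcome of the policy `π`: every item is picked by the agent that
`M` assigns it to. -/
def IsOutcome {n : ℕ} {ι : Type} [Fintype ι] [DecidableEq ι]
    (P : Fin n → LinearOrder ι) (π : List (Fin n)) (M : ι → Fin n) : Prop :=
  ∀ o : ι, (M o, o) ∈ seqAlloc P π Finset.univ

/-- The set of items that agent `a` picks under the policy `π`. -/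
noncomputable def receives {n : ℕ} {ι : Type} [Fintype ι] [DecidableEq ι]
    (P : Fin n → LinearOrder ι) (π : List (Fin n)) (a : Fin n) : Finset ι :=
  Finset.univ.filter (fun o => (a, o) ∈ seqAlloc P π Finset.univ)

/-- An allocation `M` is Pareto optimal if there is no bijection `f` of the items such
that every agent weakly prefers `f o` to `o` for each item `o` she gets, with at least
one strict preference. -/
def ParetoOptimal {n : ℕ} {ι : Type} (P : Fin n → LinearOrder ι) (M : ι → Fin n) : Prop :=
  ¬ ∃ f : ι ≃ ι, (∀ o : ι, (P (M o)).le o (f o)) ∧ (∃ o : ι, (P (M o)).lt o (f o))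

/-- A policy is balanced if every agent has exactly `k` turns. -/
def BalancedPolicy {n : ℕ} (k : ℕ) (π : List (Fin n)) : Prop :=
  ∀ a : Fin n, π.count a = k

/-- An allocation is balanced if every agent receives exactly `k` items. -/
def BalancedAlloc {n : ℕ} {ι : Type} [Fintype ι] (k : ℕ) (M : ι → Fin n) : Prop :=
  ∀ a : Fin n, (Finset.univ.filter (fun o => M o = a)).card = k

/-- A policy is recursively balanced if it splits into `k` consecutive rounds of `n`
turns each, every agent having exactly one turn in each round. -/
def RecBalanced (n k : ℕ) (π : List (Fin n)) : Prop :=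
  ∃ rounds : List (List (Fin n)), rounds.length = k ∧
    (∀ r ∈ rounds, r.length = n ∧ ∀ a : Fin n, r.count a = 1) ∧
    π = rounds.flatten

/-- A strict alternation policy: every one of the `k` rounds uses the same order `σ`
over the agents. -/
def StrictAlt (n k : ℕ) (π : List (Fin n)) : Prop :=
  ∃ σ : List (Fin n), σ.length = n ∧ (∀ a : Fin n, σ.count a = 1) ∧
    π = (List.replicate k σ).flatten

/-- A balanced alternation policy: odd-numbered rounds use the order `σ` over the agents
and even-numbered rounds use its reverse. -/
def BalAlt (n k : ℕ) (π : List (Fin n)) : Prop :=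
  ∃ σ : List (Fin n), σ.length = n ∧ (∀ a : Fin n, σ.count a = 1) ∧
    π = ((List.range k).map (fun r => if r % 2 = 0 then σ else σ.reverse)).flatten

/-- `p j i` (for `1 ≤ i ≤ k`) is the item ranked `i`-th by agent `j` among the items `M`
allocates to `j`: it is allocated to `j`, and exactly `i - 1` of the items allocated
to `j` are strictly preferred to it by agent `j`. -/
def IsRankingOf {n : ℕ} {ι : Type} [Fintype ι] (P : Fin n → LinearOrder ι) (k : ℕ)
    (M : ι → Fin n) (p : Fin n → ℕ → ι) : Prop :=
  ∀ (j : Fin n) (i : ℕ), 1 ≤ i → i ≤ k →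
    M (p j i) = j ∧
    (Finset.univ.filter (fun o => M o = j ∧ (P j).lt (p j i) o)).card = i - 1

/-- Condition 3: for all `1 ≤ t < s ≤ k` and all agents `j, j'`, agent `j` strictly
prefers `p j t` to `p j' s`. -/
def Cond3 {n : ℕ} {ι : Type} (P : Fin n → LinearOrder ι) (k : ℕ) (p : Fin n → ℕ → ι) : Prop :=
  ∀ t s : ℕ, 1 ≤ t → t < s → s ≤ k → ∀ j j' : Fin n, (P j).lt (p j' s) (p j t)

/-- The edge relation of the directed graph `G_M`: for odd `i ≤ k` an edge `a → b`
whenever `b` strictly prefers `p a i` to `p b i`, and for even `i ≤ k` an edge `a → b`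
whenever `a` strictly prefers `p b i` to `p a i`. -/
def GM {n : ℕ} {ι : Type} (P : Fin n → LinearOrder ι) (k : ℕ) (p : Fin n → ℕ → ι)
    (a b : Fin n) : Prop :=
  (∃ i : ℕ, 1 ≤ i ∧ i ≤ k ∧ i % 2 = 1 ∧ (P b).lt (p b i) (p a i)) ∨
  (∃ i : ℕ, 1 ≤ i ∧ i ≤ k ∧ i % 2 = 0 ∧ (P a).lt (p a i) (p b i))

/-- The edge relation of the directed graph `H_M`: for each `i ≤ k` an edge `a → b`
whenever `b` strictly prefers `p a i` to `p b i`. -/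
def HM {n : ℕ} {ι : Type} (P : Fin n → LinearOrder ι) (k : ℕ) (p : Fin n → ℕ → ι)
    (a b : Fin n) : Prop :=
  ∃ i : ℕ, 1 ≤ i ∧ i ≤ k ∧ (P b).lt (p b i) (p a i)

/-- The `k` most preferred items of agent `j`: those items with fewer than `k` items
strictly preferred to them by `j`. -/
noncomputable def topItems {n : ℕ} {ι : Type} [Fintype ι] (P : Fin n → LinearOrder ι)
    (k : ℕ) (j : Fin n) : Finset ι :=
  Finset.univ.filter (fun o => (Finset.univ.filter (fun o' => (P j).lt o o')).card < k)

/-- The rank of item `o` in agent `j`'s preference (the most preferred item has rank 1). -/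
noncomputable def rankOf {n : ℕ} {ι : Type} [Fintype ι] (P : Fin n → LinearOrder ι)
    (j : Fin n) (o : ι) : ℕ :=
  (Finset.univ.filter (fun o' => (P j).lt o o')).card + 1
section Fav
variable {ι : Type} (L : LinearOrder ι) {S : Finset ι} (h : S.Nonempty)

theorem favorite_mem : favorite L S h ∈ S := @Finset.max'_mem ι L S h

theorem le_favorite {x : ι} (hx : x ∈ S) : L.le x (favorite L S h) :=
  @Finset.le_max' ι L S x hx

theorem lt_favorite {x : ι} (hx : x ∈ S) (hne : x ≠ favorite L S h) :
    L.lt x (favorite L S h) :=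
  @lt_of_le_of_ne ι L.toPartialOrder _ _ (le_favorite L h hx) hne

theorem LO.lt_le {L' : LinearOrder ι} {a b : ι} (h' : L'.lt a b) : L'.le a b :=
  @le_of_lt ι (@PartialOrder.toPreorder ι L'.toPartialOrder) a b h'

theorem favorite_eq {o : ι} (ho : o ∈ S) (hub : ∀ y ∈ S, L.le y o) :
    favorite L S h = o :=
  @le_antisymm ι L.toPartialOrder _ _ (@Finset.max'_le ι L S h o hub) (le_favorite L h ho)

end Fav

section Aux
variable {ι : Type} [DecidableEq ι] {n : ℕ} (P : Fin n → LinearOrder ι)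

def RR : (Fin n × ι) → (Fin n × ι) → Prop := fun x y => (P x.1).lt y.2 x.2

theorem sa_fst : ∀ (π : List (Fin n)) (S : Finset ι), π.length ≤ S.card →
    (seqAlloc P π S).map Prod.fst = π := by
  intro π
  induction π with
  | nil => intro S _; simp [seqAlloc]
  | cons a rest ih =>
    intro S hS
    have hne : S.Nonempty := by
      rw [← Finset.card_pos]; exact lt_of_lt_of_le (Nat.succ_pos _) hS
    rw [seqAlloc, dif_pos hne]
    simp only [List.map_cons, List.cons.injEq, true_and]
    apply ih
    rw [Finset.card_erase_of_mem (favorite_mem _ _)]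
    simp only [List.length_cons] at hS
    omega

theorem sa_snd_mem : ∀ (π : List (Fin n)) (S : Finset ι) (x : Fin n × ι),
    x ∈ seqAlloc P π S → x.2 ∈ S := by
  intro π
  induction π with
  | nil => intro S x hx; simp [seqAlloc] at hx
  | cons a rest ih =>
    intro S x hx
    rw [seqAlloc] at hx
    by_cases hne : S.Nonempty
    · rw [dif_pos hne] at hx
      rcases List.mem_cons.1 hx with h | h
      · subst h; exact favorite_mem (P a) hne
      · exact Finset.mem_of_mem_erase (ih _ x h)
    · rw [dif_neg hne] at hx; simp at hx

theorem sa_pairwise : ∀ (π : List (Fin n)) (S : Finset ι),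
    (seqAlloc P π S).Pairwise (RR P) := by
  intro π
  induction π with
  | nil => intro S; simp [seqAlloc]
  | cons a rest ih =>
    intro S
    rw [seqAlloc]
    by_cases hne : S.Nonempty
    · rw [dif_pos hne]
      refine List.pairwise_cons.2 ⟨?_, ih _⟩
      intro x hx
      have h2 := sa_snd_mem P _ _ x hx
      have hne' := Finset.mem_erase.1 h2
      exact lt_favorite _ _ (Finset.mem_of_mem_erase h2) hne'.1
    · rw [dif_neg hne]; simp

theorem sa_nodup : ∀ (π : List (Fin n)) (S : Finset ι),
    ((seqAlloc P π S).map Prod.snd).Nodup := by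
  intro π
  induction π with
  | nil => intro S; simp [seqAlloc]
  | cons a rest ih =>
    intro S
    rw [seqAlloc]
    by_cases hne : S.Nonempty
    · rw [dif_pos hne]
      simp only [List.map_cons, List.nodup_cons]
      refine ⟨?_, ih _⟩
      intro hmem
      rcases List.mem_map.1 hmem with ⟨x, hx, hx2⟩
      have := Finset.mem_erase.1 (sa_snd_mem P _ _ x hx)
      exact this.1 hx2
    · rw [dif_neg hne]; simp

theorem sa_toFinset (π : List (Fin n)) (S : Finset ι) (h : π.length = S.card) :
    ((seqAlloc P π S).map Prod.snd).toFinset = S := by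
  apply Finset.eq_of_subset_of_card_le
  · intro o ho
    rcases List.mem_map.1 (List.mem_toFinset.1 ho) with ⟨x, hx, rfl⟩
    exact sa_snd_mem P _ _ x hx
  · rw [List.toFinset_card_of_nodup (sa_nodup P π S), List.length_map]
    have := congrArg List.length (sa_fst P π S (le_of_eq h))
    rw [List.length_map] at this
    omega

/-- Greedy characterization: a pairwise-greedy list is the seqAlloc output. -/
theorem sa_eq : ∀ (ℓ : List (Fin n × ι)) (π : List (Fin n)) (S : Finset ι),
    ℓ.map Prod.fst = π → (ℓ.map Prod.snd).Nodup → (ℓ.map Prod.snd).toFinset = S →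
    ℓ.Pairwise (RR P) → seqAlloc P π S = ℓ := by
  intro ℓ
  induction ℓ with
  | nil => intro π S h1 _ h3 _; subst h1; simp at h3; subst h3; simp [seqAlloc]
  | cons x t ih =>
    intro π S h1 h2 h3 h4
    obtain ⟨a, o⟩ := x
    simp only [List.map_cons] at h1 h2 h3
    subst h1
    have hoS : o ∈ S := by rw [← h3]; simp
    have hne : S.Nonempty := ⟨o, hoS⟩
    have hfav : favorite (P a) S hne = o := by
      apply favorite_eq
      · exact hoS
      · intro y hy
        rw [← h3] at hy
        rcases List.mem_toFinset.1 hy with hy'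
        rcases List.mem_cons.1 hy' with h | h
        · exact h.symm ▸ (P a).le_refl o
        · rcases List.mem_map.1 h with ⟨z, hz, rfl⟩
          exact LO.lt_le (List.pairwise_cons.1 h4 |>.1 z hz)
    rw [seqAlloc, dif_pos hne, hfav]
    congr 1
    apply ih
    · rfl
    · exact (List.nodup_cons.1 h2).2
    · rw [← h3]
      ext y
      simp only [Finset.mem_erase, List.mem_toFinset, List.mem_cons]
      constructor
      · intro hy; exact ⟨fun he => (List.nodup_cons.1 h2).1 (he ▸ hy), Or.inr hy⟩
      · rintro ⟨hne', (rfl | hy)⟩; exact absurd rfl hne'; exact hy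
    · exact (List.pairwise_cons.1 h4).2

theorem mem_unique_snd {ℓ : List (Fin n × ι)} (h : (ℓ.map Prod.snd).Nodup)
    {a b : Fin n} {o : ι} (ha : (a, o) ∈ ℓ) (hb : (b, o) ∈ ℓ) : a = b := by
  induction ℓ with
  | nil => simp at ha
  | cons x t ih =>
    simp only [List.map_cons, List.nodup_cons] at h
    rcases List.mem_cons.1 ha with h1 | h1 <;> rcases List.mem_cons.1 hb with h2 | h2
    · simpa using congrArg Prod.fst (h1.trans h2.symm)
    · exact absurd (List.mem_map.2 ⟨_, h2, rfl⟩) (h1 ▸ h.1)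
    · exact absurd (List.mem_map.2 ⟨_, h1, rfl⟩) (h2 ▸ h.1)
    · exact ih h.2 h1 h2

end Aux


section LO
variable {ι : Type} {L : LinearOrder ι}

theorem LO.irrefl (a : ι) : ¬ L.lt a a :=
  @lt_irrefl ι (@PartialOrder.toPreorder ι L.toPartialOrder) a

theorem LO.ltt {a b c : ι} (h1 : L.lt a b) (h2 : L.lt b c) : L.lt a c :=
  @lt_trans ι (@PartialOrder.toPreorder ι L.toPartialOrder) a b c h1 h2

theorem LO.tot (a b : ι) : L.lt a b ∨ a = b ∨ L.lt b a :=
  @lt_trichotomy ι L a b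

end LO

section B2
variable {ι : Type} [Fintype ι] [DecidableEq ι] {n : ℕ} (P : Fin n → LinearOrder ι)

/-- strictly decreasing list wrt agent j's preference -/
def DecList (j : Fin n) (l : List ι) : Prop := l.Pairwise (fun a b => (P j).lt b a)

theorem DecList.nodup {j : Fin n} {l : List ι} (h : DecList P j l) : l.Nodup :=
  h.imp (fun hlt he => absurd (he ▸ hlt) (LO.irrefl _))

theorem filter_gt_take {j : Fin n} : ∀ (l : List ι), DecList P j l →
    ∀ (m : ℕ) (hm : m < l.length),
    l.filter (fun o => decide ((P j).lt (l.get ⟨m, hm⟩) o)) = l.take m := by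
  intro l
  induction l with
  | nil => intro _ m hm; simp at hm
  | cons a t ih =>
    intro hd m hm
    have hd' := List.pairwise_cons.1 hd
    match m with
    | 0 =>
      simp only [List.get, List.take_zero]
      rw [List.filter_cons_of_neg, List.filter_eq_nil_iff.2]
      · intro o ho
        simp only [decide_eq_true_eq]
        exact fun hlt => absurd (hd'.1 o ho) (fun h2 => (LO.irrefl o (LO.ltt h2 hlt)))
      · simp only [decide_eq_true_eq]
        exact LO.irrefl a
    | m+1 =>
      have hm' : m < t.length := by simpa using hm
      simp only [List.get, List.take_succ_cons]
      rw [List.filter_cons_of_pos, ih hd'.2 m hm']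
      simp only [decide_eq_true_eq]
      exact hd'.1 _ (t.get_mem _)

/-- rank count for a strictly decreasing list covering agent j's items -/
theorem rank_count {M : ι → Fin n} {j : Fin n} {l : List ι}
    (hd : DecList P j l) (hA : l.toFinset = Finset.univ.filter (fun o => M o = j))
    (m : ℕ) (hm : m < l.length) :
    (Finset.univ.filter (fun o => M o = j ∧ (P j).lt (l.get ⟨m, hm⟩) o)).card = m := by
  have h1 : (Finset.univ.filter (fun o => M o = j ∧ (P j).lt (l.get ⟨m, hm⟩) o))
      = (Finset.univ.filter (fun o => M o = j)).filter (fun o => (P j).lt (l.get ⟨m, hm⟩) o) := by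
    rw [Finset.filter_filter]
  have h2 : (Finset.univ.filter (fun o => M o = j)).filter (fun o => (P j).lt (l.get ⟨m, hm⟩) o)
      = (l.filter (fun o => decide ((P j).lt (l.get ⟨m, hm⟩) o))).toFinset := by
    rw [← hA]
    ext o
    simp [List.mem_filter]
  rw [h1, h2, List.toFinset_card_of_nodup ((List.Nodup.filter _) hd.nodup),
    filter_gt_take P l hd m hm, List.length_take]
  omega

/-- the element of given rank is unique -/
theorem rank_unique {M : ι → Fin n} {j : Fin n} {a b : ι}
    (ha : M a = j) (hb : M b = j)
    (hc : (Finset.univ.filter (fun o => M o = j ∧ (P j).lt a o)).card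
        = (Finset.univ.filter (fun o => M o = j ∧ (P j).lt b o)).card) : a = b := by
  by_contra hne
  rcases LO.tot a b with h | h | h
  · have hss : (Finset.univ.filter (fun o => M o = j ∧ (P j).lt b o))
        ⊂ (Finset.univ.filter (fun o => M o = j ∧ (P j).lt a o)) := by
      rw [Finset.ssubset_def]
      refine ⟨?_, ?_⟩
      · intro o ho
        simp only [Finset.mem_filter] at ho ⊢
        exact ⟨ho.1, ho.2.1, LO.ltt h ho.2.2⟩
      · intro hsub
        have : b ∈ Finset.univ.filter (fun o => M o = j ∧ (P j).lt a o) := by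
          simp only [Finset.mem_filter]; exact ⟨Finset.mem_univ _, hb, h⟩
        have := Finset.mem_filter.1 (hsub this)
        exact LO.irrefl b this.2.2
    have := Finset.card_lt_card hss; omega
  · exact hne h
  · have hss : (Finset.univ.filter (fun o => M o = j ∧ (P j).lt a o))
        ⊂ (Finset.univ.filter (fun o => M o = j ∧ (P j).lt b o)) := by
      rw [Finset.ssubset_def]
      refine ⟨?_, ?_⟩
      · intro o ho
        simp only [Finset.mem_filter] at ho ⊢
        exact ⟨ho.1, ho.2.1, LO.ltt h ho.2.2⟩
      · intro hsub
        have : a ∈ Finset.univ.filter (fun o => M o = j ∧ (P j).lt b o) := by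
          simp only [Finset.mem_filter]; exact ⟨Finset.mem_univ _, ha, h⟩
        have := Finset.mem_filter.1 (hsub this)
        exact LO.irrefl a this.2.2
    have := Finset.card_lt_card hss; omega
end B2


section B3
variable {ι : Type} [DecidableEq ι] {n : ℕ}


def filterJ (ℓ : List (Fin n × ι)) (j : Fin n) : List (Fin n × ι) :=
  ℓ.filter (fun x => x.1 == j)

theorem length_filterJ {ℓ : List (Fin n × ι)} {π : List (Fin n)}
    (Hfst : ℓ.map Prod.fst = π) (j : Fin n) : (filterJ ℓ j).length = π.count j := by
  rw [← Hfst, List.count_eq_countP, List.countP_map, filterJ, ← List.countP_eq_length_filter]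
  rfl

theorem mem_filterJ_fst {ℓ : List (Fin n × ι)} {j : Fin n} {x : Fin n × ι}
    (h : x ∈ filterJ ℓ j) : x.1 = j := by
  have := List.of_mem_filter h
  simpa using this

noncomputable def entryOf (ℓ : List (Fin n × ι)) (junk : ι) (j : Fin n) (t : ℕ) : Fin n × ι :=
  (filterJ ℓ j).getD (t-1) (j, junk)

theorem entry_fst (ℓ : List (Fin n × ι)) (junk : ι) (j : Fin n) (t : ℕ) :
    (entryOf ℓ junk j t).1 = j := by
  rw [entryOf]
  rcases lt_or_ge (t-1) (filterJ ℓ j).length with h | h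
  · rw [List.getD_eq_getElem _ _ h]
    exact mem_filterJ_fst (List.getElem_mem h)
  · rw [List.getD_eq_default _ _ h]

theorem entry_mem {ℓ : List (Fin n × ι)} {junk : ι} {j : Fin n} {t : ℕ}
    (h : t - 1 < (filterJ ℓ j).length) : entryOf ℓ junk j t ∈ ℓ := by
  rw [entryOf, List.getD_eq_getElem _ _ h]
  exact List.mem_of_mem_filter (List.getElem_mem h)

/-- Master ordering lemma: if by position `L` agent `j` has already had her `t`-th
pick but agent `j'` has not had her `s`-th pick, then `j` prefers her `t`-th pick to
`j'`'s `s`-th pick. -/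
theorem master_order {ℓ : List (Fin n × ι)} {π : List (Fin n)} (P : Fin n → LinearOrder ι)
    (junk : ι) (Hfst : ℓ.map Prod.fst = π) (Hpw : ℓ.Pairwise (RR P))
    {t s : ℕ} {j j' : Fin n} (L : ℕ)
    (ht : 1 ≤ t) (h1 : t ≤ (π.take L).count j) (h2 : (π.take L).count j' < s)
    (h3 : s ≤ π.count j') :
    (P j).lt (entryOf ℓ junk j' s).2 (entryOf ℓ junk j t).2 := by
  have hsplit : ∀ a : Fin n, filterJ ℓ a = filterJ (ℓ.take L) a ++ filterJ (ℓ.drop L) a := by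
    intro a
    rw [filterJ, filterJ, filterJ, ← List.filter_append, List.take_append_drop]
  have hfstTake : (ℓ.take L).map Prod.fst = π.take L := by
    rw [List.map_take, Hfst]
  have len1 : (filterJ (ℓ.take L) j).length = (π.take L).count j :=
    length_filterJ hfstTake j
  have len1' : (filterJ (ℓ.take L) j').length = (π.take L).count j' :=
    length_filterJ hfstTake j'
  have hjlen : t - 1 < (filterJ ℓ j).length := by
    rw [hsplit j, List.length_append]; omega
  have hjlen' : s - 1 < (filterJ ℓ j').length := by
    rw [length_filterJ Hfst]; omega
  have e1 : entryOf ℓ junk j t ∈ ℓ.take L := by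
    have h4 : t - 1 < (filterJ (ℓ.take L) j).length := by omega
    have h5 : t - 1 < (filterJ (ℓ.take L) j ++ filterJ (ℓ.drop L) j).length := by
      rw [List.length_append]; omega
    rw [entryOf, hsplit j, List.getD_eq_getElem _ _ h5,
      List.getElem_append_left h4]
    exact List.mem_of_mem_filter (List.getElem_mem h4)
  have e2 : entryOf ℓ junk j' s ∈ ℓ.drop L := by
    have h4 : (filterJ (ℓ.take L) j').length ≤ s - 1 := by omega
    have h5 : s - 1 < (filterJ (ℓ.take L) j' ++ filterJ (ℓ.drop L) j').length := by
      rw [← hsplit j']; exact hjlen'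
    have h6 : s - 1 - (filterJ (ℓ.take L) j').length < (filterJ (ℓ.drop L) j').length := by
      rw [List.length_append] at h5; omega
    rw [entryOf, hsplit j', List.getD_eq_getElem _ _ h5,
      List.getElem_append_right h4]
    exact List.mem_of_mem_filter (List.getElem_mem h6)
  have hpw2 := Hpw
  rw [← List.take_append_drop L ℓ] at hpw2
  have := ((List.pairwise_append.1 hpw2).2.2) _ e1 _ e2
  rw [RR, entry_fst] at this
  exact this

end B3

section B4
variable {α : Type}

theorem take_flatten_full (nn : ℕ) : ∀ (rounds : List (List α)),
    (∀ r ∈ rounds, r.length = nn) → ∀ q, q ≤ rounds.length →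
    (rounds.flatten).take (nn*q) = (rounds.take q).flatten := by
  intro rounds
  induction rounds with
  | nil => intro _ q hq; simp at hq; simp [hq]
  | cons r rest ih =>
    intro hlen q hq
    match q with
    | 0 => simp
    | q+1 =>
      have hr : r.length = nn := hlen r (by simp)
      rw [List.take_succ_cons, List.flatten_cons, List.flatten_cons]
      have : nn*(q+1) = r.length + nn*q := by rw [hr]; ring
      rw [this, List.take_length_add_append]
      rw [ih (fun x hx => hlen x (by simp [hx])) q (by simpa using hq)]

theorem take_flatten (nn : ℕ) : ∀ (rounds : List (List α)),
    (∀ r ∈ rounds, r.length = nn) → ∀ (q : ℕ) (hq : q < rounds.length) (c : ℕ), c ≤ nn →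
    (rounds.flatten).take (nn*q + c) = (rounds.take q).flatten ++ (rounds.get ⟨q, hq⟩).take c := by
  intro rounds
  induction rounds with
  | nil => intro _ q hq; simp at hq
  | cons r rest ih =>
    intro hlen q hq c hc
    have hr : r.length = nn := hlen r (by simp)
    match q with
    | 0 =>
      simp only [Nat.mul_zero, Nat.zero_add, List.take_zero, List.flatten_nil,
        List.nil_append, List.get, List.flatten_cons]
      rw [List.take_append_of_le_length (by omega)]
    | q+1 =>
      rw [List.take_succ_cons, List.flatten_cons, List.flatten_cons]
      have : nn*(q+1) + c = r.length + (nn*q + c) := by rw [hr]; ring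
      rw [this, List.take_length_add_append, List.append_assoc]
      congr 1
      exact ih (fun x hx => hlen x (by simp [hx])) q (by simpa using hq) c hc

theorem count_flatten_ones {n : ℕ} (j : Fin n) : ∀ (rounds : List (List (Fin n))),
    (∀ r ∈ rounds, r.count j = 1) → (rounds.flatten).count j = rounds.length := by
  intro rounds h
  rw [List.count_flatten]
  have : rounds.map (List.count j) = List.replicate rounds.length 1 := by
    have := List.eq_replicate_of_mem (l := rounds.map (List.count j)) (a := 1) ?_
    · rw [this, List.length_map]
    · intro b hb
      rcases List.mem_map.1 hb with ⟨r, hr, rfl⟩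
      exact h r hr
  rw [this, List.sum_replicate]; simp

theorem mem_take_indexOf {β : Type} [DecidableEq β] {a : β} : ∀ {l : List β} {m : ℕ},
    a ∈ l.take m → l.idxOf a < m := by
  intro l
  induction l with
  | nil => intro m h; simp at h
  | cons b t ih =>
    intro m h
    match m with
    | 0 => simp at h
    | m+1 =>
      rw [List.take_succ_cons] at h
      by_cases hab : a = b
      · subst hab; rw [List.idxOf_cons_self]; omega
      · rcases List.mem_cons.1 h with h' | h'
        · exact absurd h' hab
        · rw [List.idxOf_cons_ne _ (fun he => hab he.symm)]
          have := ih h'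
          omega

theorem count_take_self {β : Type} [DecidableEq β] {a : β} {l : List β} (hl : l.count a = 1)
    (ha : a ∈ l) : (l.take (l.idxOf a + 1)).count a = 1 := by
  have h1 : a ∈ l.take (l.idxOf a + 1) := by
    have hlt : l.idxOf a < l.length := List.idxOf_lt_length_iff.2 ha
    have hlt2 : l.idxOf a < (l.take (l.idxOf a + 1)).length := by
      rw [List.length_take]; omega
    have hm := List.getElem_mem hlt2
    rw [List.getElem_take, List.getElem_idxOf hlt] at hm
    exact hm
  have h2 : 0 < (l.take (l.idxOf a + 1)).count a := List.count_pos_iff.2 h1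
  have h3 : (l.take (l.idxOf a + 1)).count a ≤ l.count a :=
    (List.take_sublist _ _).count_le a
  omega

theorem count_take_zero {β : Type} [DecidableEq β] {a : β} {l : List β} {m : ℕ}
    (h : m ≤ l.idxOf a) : (l.take m).count a = 0 := by
  by_contra hc
  have : 0 < (l.take m).count a := Nat.pos_of_ne_zero hc
  have := mem_take_indexOf (List.count_pos_iff.1 this)
  omega

end B4


theorem nodup_indexOf_getElem {β : Type} [DecidableEq β] {l : List β} (hnd : l.Nodup)
    {m : ℕ} (hm : m < l.length) : l.idxOf l[m] = m := by
  have h1 : l.idxOf l[m] < l.length := List.idxOf_lt_length_iff.2 (List.getElem_mem hm)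
  have h2 : l[l.idxOf l[m]] = l[m] := List.getElem_idxOf h1
  exact List.Nodup.getElem_inj_iff hnd |>.1 h2

theorem indexOf_reverse' {β : Type} [DecidableEq β] {l : List β} (hnd : l.Nodup)
    {a : β} (ha : a ∈ l) : l.reverse.idxOf a = l.length - 1 - l.idxOf a := by
  have hlt : l.idxOf a < l.length := List.idxOf_lt_length_iff.2 ha
  have h1 : l.length - 1 - l.idxOf a < l.reverse.length := by
    rw [List.length_reverse]; omega
  have h2 : l.reverse[l.length - 1 - l.idxOf a] = a := by
    rw [List.getElem_reverse]
    have h3 : l.length - 1 - (l.length - 1 - l.idxOf a) = l.idxOf a := by omega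
    simp only [h3]
    exact List.getElem_idxOf hlt
  have := nodup_indexOf_getElem (List.nodup_reverse.2 hnd) h1
  rw [h2] at this
  exact this

section LO2
variable {ι : Type} {L : LinearOrder ι}
theorem LO.antisymm {a b : ι} (h1 : L.le a b) (h2 : L.le b a) : a = b :=
  @le_antisymm ι L.toPartialOrder a b h1 h2
end LO2

theorem sa_pareto {ι : Type} [DecidableEq ι] {n : ℕ} (P : Fin n → LinearOrder ι) :
    ∀ (π : List (Fin n)) (S : Finset ι) (f : ι ≃ ι),
    (∀ x ∈ seqAlloc P π S, (P x.1).le x.2 (f x.2)) →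
    (∀ x ∈ seqAlloc P π S, f x.2 ∈ S) →
    ∀ x ∈ seqAlloc P π S, f x.2 = x.2 := by
  intro π
  induction π with
  | nil => intro S f _ _ x hx; simp [seqAlloc] at hx
  | cons a rest ih =>
    intro S f h1 h2 x hx
    rw [seqAlloc] at hx h1 h2
    by_cases hne : S.Nonempty
    · rw [dif_pos hne] at hx h1 h2
      have hfavfix : f (favorite (P a) S hne) = favorite (P a) S hne := by
        have hle := h1 (a, favorite (P a) S hne) List.mem_cons_self
        have hmem := h2 (a, favorite (P a) S hne) List.mem_cons_self
        exact LO.antisymm (le_favorite (P a) hne hmem) hle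
      rcases List.mem_cons.1 hx with rfl | hx'
      · exact hfavfix
      · refine ih (S.erase (favorite (P a) S hne)) f ?_ ?_ x hx'
        · intro y hy; exact h1 y (List.mem_cons_of_mem _ hy)
        · intro y hy
          have hyS : f y.2 ∈ S := h2 y (List.mem_cons_of_mem _ hy)
          refine Finset.mem_erase.2 ⟨?_, hyS⟩
          intro heq
          have hy2 : y.2 = favorite (P a) S hne := by
            apply f.injective; rw [heq, hfavfix]
          have hmem2 := sa_snd_mem P rest _ y hy
          rw [hy2] at hmem2
          exact (Finset.mem_erase.1 hmem2).1 rfl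
    · rw [dif_neg hne] at hx; simp at hx

theorem forward_dir {ι : Type} [Fintype ι] [DecidableEq ι] {n k : ℕ} (hn : 0 < n) (hk : 1 ≤ k)
    (hcard : Fintype.card ι = k * n) (P : Fin n → LinearOrder ι) (M : ι → Fin n)
    (π : List (Fin n)) (hBA : BalAlt n k π) (hOut : IsOutcome P π M) :
    ParetoOptimal P M ∧ BalancedAlloc k M ∧
      ∀ p : Fin n → ℕ → ι, IsRankingOf P k M p →
        Cond3 P k p ∧ ∀ a : Fin n, ¬ Relation.TransGen (GM P k p) a a := by
  obtain ⟨σ, hσlen, hσcnt, hπ⟩ := hBA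
  set rounds : List (List (Fin n)) :=
    (List.range k).map (fun r => if r % 2 = 0 then σ else σ.reverse) with hrounds
  have hrlen : rounds.length = k := by simp [hrounds]
  have hrmem : ∀ r ∈ rounds, r.length = n := by
    intro r hr
    rcases List.mem_map.1 hr with ⟨i, _, rfl⟩
    split <;> simp [hσlen]
  have hrcnt : ∀ r ∈ rounds, ∀ a : Fin n, r.count a = 1 := by
    intro r hr a
    rcases List.mem_map.1 hr with ⟨i, _, rfl⟩
    split
    · exact hσcnt a
    · rw [List.count_reverse]; exact hσcnt a
  have hπlen : π.length = k * n := by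
    rw [hπ, List.length_flatten]
    have h0 : ((List.range k).map (fun r => if r % 2 = 0 then σ else σ.reverse)).map
        List.length = List.replicate k n := by
      have h1 := List.eq_replicate_of_mem
        (l := ((List.range k).map (fun r => if r % 2 = 0 then σ else σ.reverse)).map
          List.length) (a := n) ?_
      · rw [h1]; simp
      · intro b hb
        rcases List.mem_map.1 hb with ⟨r, hr, rfl⟩
        exact hrmem r hr
    rw [h0, List.sum_replicate, smul_eq_mul]
  have hπcnt : ∀ a : Fin n, π.count a = k := by
    intro a
    rw [hπ, count_flatten_ones a rounds (fun r hr => hrcnt r hr a), hrlen]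
  have hππ : π.length ≤ (Finset.univ : Finset ι).card := by
    rw [Finset.card_univ, hcard, hπlen]
  set ℓ := seqAlloc P π (Finset.univ : Finset ι) with hℓ
  have Hfst : ℓ.map Prod.fst = π := sa_fst P π _ hππ
  have Hpw : ℓ.Pairwise (RR P) := sa_pairwise P π _
  have Hnd : (ℓ.map Prod.snd).Nodup := sa_nodup P π _
  have Hfin : (ℓ.map Prod.snd).toFinset = Finset.univ :=
    sa_toFinset P π _ (by rw [Finset.card_univ, hcard, hπlen])
  have HM : ∀ x ∈ ℓ, M x.2 = x.1 := by
    intro x hx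
    exact mem_unique_snd Hnd (hOut x.2) (by rwa [Prod.mk.eta])
  have hι : Nonempty ι := by
    rw [← Fintype.card_pos_iff, hcard]
    exact Nat.mul_pos hk hn
  set junk : ι := hι.some with hjunk
  set q : Fin n → ℕ → ι := fun j t => (entryOf ℓ junk j t).2 with hq
  have lenJ : ∀ j, (filterJ ℓ j).length = k := fun j => by rw [length_filterJ Hfst, hπcnt]
  set jP : Fin n → List ι := fun j => (filterJ ℓ j).map Prod.snd with hjP
  have lenjP : ∀ j, (jP j).length = k := fun j => by
    rw [hjP]; simp only [List.length_map]; exact lenJ j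
  have hdec : ∀ j, DecList P j (jP j) := by
    intro j
    rw [hjP]
    apply List.pairwise_map.2
    have h1 : (filterJ ℓ j).Pairwise (RR P) :=
      List.Pairwise.sublist (List.filter_sublist (l := ℓ)) Hpw
    refine h1.imp_of_mem ?_
    intro x y hx _ hr
    have hfx : x.1 = j := mem_filterJ_fst hx
    rw [← hfx]
    exact hr
  have hAj : ∀ j, (jP j).toFinset = Finset.univ.filter (fun o => M o = j) := by
    intro j; ext o
    simp only [List.mem_toFinset, Finset.mem_filter, Finset.mem_univ, true_and, hjP,
      List.mem_map]
    constructor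
    · rintro ⟨x, hx, rfl⟩
      rw [HM x (List.mem_of_mem_filter hx), mem_filterJ_fst hx]
    · intro hMo
      refine ⟨(j, o), ?_, rfl⟩
      apply List.mem_filter.2
      exact ⟨by rw [← hMo]; exact hOut o, by simp⟩
  have hqget : ∀ j t, 1 ≤ t → t ≤ k → ∀ (h : t - 1 < (jP j).length),
      q j t = (jP j).get ⟨t-1, h⟩ := by
    intro j t h1 h2 h
    rw [hq]
    simp only
    rw [entryOf, List.getD_eq_getElem _ _ (by rw [lenJ]; omega)]
    simp only [hjP, List.get_eq_getElem, List.getElem_map]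
  have hRank : IsRankingOf P k M q := by
    intro j t h1 h2
    have hlt : t - 1 < (jP j).length := by rw [lenjP]; omega
    constructor
    · have hmem : entryOf ℓ junk j t ∈ ℓ := entry_mem (by rw [lenJ]; omega)
      rw [hq]
      simp only
      rw [HM _ hmem, entry_fst]
    · have hrc := rank_count P (hdec j) (hAj j) (t-1) hlt
      rw [← hqget j t h1 h2 hlt] at hrc
      exact hrc
  have hBalM : BalancedAlloc k M := by
    intro j
    rw [← hAj j, List.toFinset_card_of_nodup (hdec j).nodup, lenjP]
  have hUniq : ∀ p, IsRankingOf P k M p → ∀ j t, 1 ≤ t → t ≤ k → p j t = q j t := by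
    intro p hp j t h1 h2
    obtain ⟨hp1, hp2⟩ := hp j t h1 h2
    obtain ⟨hq1, hq2⟩ := hRank j t h1 h2
    exact rank_unique P hp1 hq1 (by rw [hp2, hq2])
  have hcnt_take : ∀ (t : ℕ), t ≤ k → ∀ a : Fin n, (π.take (n * t)).count a = t := by
    intro t ht a
    rw [hπ, take_flatten_full n rounds hrmem t (by rw [hrlen]; omega),
      count_flatten_ones a _ (fun r hr => hrcnt r (List.mem_of_mem_take hr) a),
      List.length_take, hrlen]
    omega
  have hC3q : Cond3 P k q := by
    intro t s h1 h2 h3 j j'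
    exact master_order P junk Hfst Hpw (L := n * t) h1
      (by rw [hcnt_take t (by omega) j])
      (by rw [hcnt_take t (by omega) j']; omega)
      (by rw [hπcnt]; exact h3)
  have hC3 : ∀ p, IsRankingOf P k M p → Cond3 P k p := by
    intro p hp t s h1 h2 h3 j j'
    rw [hUniq p hp j t h1 (by omega), hUniq p hp j' s (by omega) h3]
    exact hC3q t s h1 h2 h3 j j'
  have hmemσ : ∀ a : Fin n, a ∈ σ := fun a =>
    List.count_pos_iff.1 (by rw [hσcnt]; omega)
  have hσnd : σ.Nodup := List.nodup_iff_count_le_one.2 (fun a => le_of_eq (hσcnt a))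
  have hiOlt : ∀ a : Fin n, σ.idxOf a < n := fun a => by
    have h := List.idxOf_lt_length_iff.2 (hmemσ a)
    omega
  have hEdge : ∀ a b : Fin n, GM P k q a b → σ.idxOf a < σ.idxOf b := by
    intro a b hgm
    have hab : a ≠ b := by
      rintro rfl
      rcases hgm with ⟨i, _, _, _, hlt⟩ | ⟨i, _, _, _, hlt⟩ <;> exact LO.irrefl _ hlt
    have hne : σ.idxOf a ≠ σ.idxOf b := by
      intro he
      apply hab
      have h1 := List.getElem_idxOf (List.idxOf_lt_length_iff.2 (hmemσ a))
      have h2 := List.getElem_idxOf (List.idxOf_lt_length_iff.2 (hmemσ b))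
      rw [← h1, ← h2]
      simp only [he]
    by_contra hcon
    push_neg at hcon
    have hba : σ.idxOf b < σ.idxOf a := lt_of_le_of_ne hcon (Ne.symm hne)
    rcases hgm with ⟨i, hi1, hi2, hipar, hlt⟩ | ⟨i, hi1, hi2, hipar, hlt⟩
    · -- odd i : round i-1 uses σ, b picks before a
      have hiround : i - 1 < rounds.length := by rw [hrlen]; omega
      have hgetr : rounds.get ⟨i-1, hiround⟩ = σ := by
        simp only [hrounds, List.get_eq_getElem, List.getElem_map, List.getElem_range]
        rw [if_pos (by omega)]
      have htake : π.take (n*(i-1) + (σ.idxOf b + 1))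
          = (rounds.take (i-1)).flatten ++ σ.take (σ.idxOf b + 1) := by
        rw [hπ, take_flatten n rounds hrmem (i-1) hiround _
          (by have := hiOlt b; omega)]
        rw [hgetr]
      have hcfl : ((rounds.take (i-1)).flatten).count b = i - 1 := by
        rw [count_flatten_ones b _ (fun r hr => hrcnt r (List.mem_of_mem_take hr) b),
          List.length_take, hrlen]
        omega
      have hcfl' : ((rounds.take (i-1)).flatten).count a = i - 1 := by
        rw [count_flatten_ones a _ (fun r hr => hrcnt r (List.mem_of_mem_take hr) a),
          List.length_take, hrlen]
        omega
      have hcnt1 : (π.take (n*(i-1) + (σ.idxOf b + 1))).count b = i := by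
        rw [htake, List.count_append, hcfl, count_take_self (hσcnt b) (hmemσ b)]
        omega
      have hcnt2 : (π.take (n*(i-1) + (σ.idxOf b + 1))).count a = i - 1 := by
        rw [htake, List.count_append, hcfl',
          count_take_zero (a := a) (l := σ) (m := σ.idxOf b + 1) (by omega)]
        omega
      have hmo := master_order P junk Hfst Hpw (t := i) (s := i) (j := b) (j' := a)
        (L := n*(i-1) + (σ.idxOf b + 1)) hi1
        (by rw [hcnt1]) (by rw [hcnt2]; omega) (by rw [hπcnt]; exact hi2)
      exact LO.irrefl _ (LO.ltt hlt hmo)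
    · -- even i : round i-1 uses σ.reverse, a picks before b
      have hiround : i - 1 < rounds.length := by rw [hrlen]; omega
      have hgetr : rounds.get ⟨i-1, hiround⟩ = σ.reverse := by
        simp only [hrounds, List.get_eq_getElem, List.getElem_map, List.getElem_range]
        rw [if_neg (by omega)]
      have hrevlt : σ.reverse.idxOf a < n := by
        have h := List.idxOf_lt_length_iff.2 ((List.mem_reverse).2 (hmemσ a))
        rw [List.length_reverse] at h
        omega
      have htake : π.take (n*(i-1) + (σ.reverse.idxOf a + 1))
          = (rounds.take (i-1)).flatten ++ σ.reverse.take (σ.reverse.idxOf a + 1) := by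
        rw [hπ, take_flatten n rounds hrmem (i-1) hiround _ (by omega)]
        rw [hgetr]
      have hcfl : ((rounds.take (i-1)).flatten).count a = i - 1 := by
        rw [count_flatten_ones a _ (fun r hr => hrcnt r (List.mem_of_mem_take hr) a),
          List.length_take, hrlen]
        omega
      have hcfl' : ((rounds.take (i-1)).flatten).count b = i - 1 := by
        rw [count_flatten_ones b _ (fun r hr => hrcnt r (List.mem_of_mem_take hr) b),
          List.length_take, hrlen]
        omega
      have hrevidx : σ.reverse.idxOf a + 1 ≤ σ.reverse.idxOf b := by
        rw [indexOf_reverse' hσnd (hmemσ a), indexOf_reverse' hσnd (hmemσ b), hσlen]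
        have := hiOlt a
        have := hiOlt b
        omega
      have hcnt1 : (π.take (n*(i-1) + (σ.reverse.idxOf a + 1))).count a = i := by
        rw [htake, List.count_append, hcfl,
          count_take_self (by rw [List.count_reverse]; exact hσcnt a)
            (by rw [List.mem_reverse]; exact hmemσ a)]
        omega
      have hcnt2 : (π.take (n*(i-1) + (σ.reverse.idxOf a + 1))).count b = i - 1 := by
        rw [htake, List.count_append, hcfl', count_take_zero hrevidx]
        omega
      have hmo := master_order P junk Hfst Hpw (t := i) (s := i) (j := a) (j' := b)
        (L := n*(i-1) + (σ.reverse.idxOf a + 1)) hi1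
        (by rw [hcnt1]) (by rw [hcnt2]; omega) (by rw [hπcnt]; exact hi2)
      exact LO.irrefl _ (LO.ltt hlt hmo)
  have hAcyc : ∀ p, IsRankingOf P k M p → ∀ a, ¬ Relation.TransGen (GM P k p) a a := by
    intro p hp a hcyc
    have hsame : ∀ x y, GM P k p x y → GM P k q x y := by
      intro x y hxy
      rcases hxy with ⟨i, h1, h2, h3, h4⟩ | ⟨i, h1, h2, h3, h4⟩
      · exact Or.inl ⟨i, h1, h2, h3, by
          rw [← hUniq p hp y i h1 h2, ← hUniq p hp x i h1 h2]; exact h4⟩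
      · exact Or.inr ⟨i, h1, h2, h3, by
          rw [← hUniq p hp y i h1 h2, ← hUniq p hp x i h1 h2]; exact h4⟩
    have hmono : ∀ x y, Relation.TransGen (GM P k p) x y → σ.idxOf x < σ.idxOf y := by
      intro x y h
      induction h with
      | single h => exact hEdge _ _ (hsame _ _ h)
      | tail h1 h2 ih => exact lt_trans ih (hEdge _ _ (hsame _ _ h2))
    exact lt_irrefl _ (hmono a a hcyc)
  have hPO : ParetoOptimal P M := by
    rintro ⟨f, hf1, o₀, hf2⟩
    have hfix := sa_pareto P π Finset.univ f ?_ ?_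
    · have hfo := hfix (M o₀, o₀) (hOut o₀)
      simp only at hfo
      rw [hfo] at hf2
      exact LO.irrefl _ hf2
    · intro x hx
      have hmx := HM x hx
      rw [← hmx]
      exact hf1 x.2
    · intro x _
      exact Finset.mem_univ _
  exact ⟨hPO, hBalM, fun p hp => ⟨hC3 p hp, hAcyc p hp⟩⟩

theorem converse_dir {ι : Type} [Fintype ι] [DecidableEq ι] {n k : ℕ} (hn : 0 < n) (hk : 1 ≤ k)
    (hcard : Fintype.card ι = k * n) (P : Fin n → LinearOrder ι) (M : ι → Fin n)
    (hBal : BalancedAlloc k M)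
    (hAll : ∀ p : Fin n → ℕ → ι, IsRankingOf P k M p →
      Cond3 P k p ∧ ∀ a : Fin n, ¬ Relation.TransGen (GM P k p) a a) :
    ∃ π : List (Fin n), BalAlt n k π ∧ IsOutcome P π M := by
  have hι : Nonempty ι := by
    rw [← Fintype.card_pos_iff, hcard]
    exact Nat.mul_pos hk hn
  set junk : ι := hι.some with hjunk
  have hsl : ∀ j : Fin n, ∃ l : List ι, l.Pairwise (fun a b => (P j).lt b a) ∧
      l.toFinset = Finset.univ.filter (fun o => M o = j) ∧ l.length = k := by
    intro j
    letI : LinearOrder ι := P j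
    refine ⟨((Finset.univ.filter (fun o => M o = j)).sort (· ≤ ·)).reverse, ?_, ?_, ?_⟩
    · have h1 : (((Finset.univ.filter (fun o => M o = j)).sort (· ≤ ·)).reverse).Pairwise
          (fun a b : ι => b ≤ a) :=
        List.pairwise_reverse.2 (Finset.pairwise_sort _ _)
      have h2 : (((Finset.univ.filter (fun o => M o = j)).sort (· ≤ ·)).reverse).Nodup :=
        List.nodup_reverse.2 (Finset.sort_nodup _ _)
      exact (h1.and h2).imp (fun ⟨hle, hne⟩ => lt_of_le_of_ne hle (Ne.symm hne))
    · rw [List.toFinset_reverse, Finset.sort_toFinset]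
    · rw [List.length_reverse, Finset.length_sort, hBal j]
  choose sl hsl1 hsl2 hsl3 using hsl
  set p0 : Fin n → ℕ → ι := fun j i => (sl j).getD (i-1) junk with hp0
  have hp0get : ∀ j i, 1 ≤ i → i ≤ k → ∀ h : i - 1 < (sl j).length,
      p0 j i = (sl j).get ⟨i-1, h⟩ := by
    intro j i h1 h2 h
    rw [hp0]
    simp only
    rw [List.getD_eq_getElem _ _ h, List.get_eq_getElem]
  have hp0mem : ∀ j i, 1 ≤ i → i ≤ k → p0 j i ∈ sl j := by
    intro j i h1 h2
    have h : i - 1 < (sl j).length := by rw [hsl3]; omega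
    rw [hp0get j i h1 h2 h]
    exact List.get_mem (sl j) _
  have hp0M : ∀ j i, 1 ≤ i → i ≤ k → M (p0 j i) = j := by
    intro j i h1 h2
    have := List.mem_toFinset.2 (hp0mem j i h1 h2)
    rw [hsl2 j] at this
    exact (Finset.mem_filter.1 this).2
  have hRank : IsRankingOf P k M p0 := by
    intro j i h1 h2
    refine ⟨hp0M j i h1 h2, ?_⟩
    have h : i - 1 < (sl j).length := by rw [hsl3]; omega
    have hrc := rank_count P (hsl1 j) (hsl2 j) (i-1) h
    rw [← hp0get j i h1 h2 h] at hrc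
    exact hrc
  obtain ⟨hC3, hAcyc⟩ := hAll p0 hRank
  have hinj : ∀ j j' i i', 1 ≤ i → i ≤ k → 1 ≤ i' → i' ≤ k →
      p0 j i = p0 j' i' → j = j' ∧ i = i' := by
    intro j j' i i' h1 h2 h3 h4 heq
    have hj : j = j' := by
      rw [← hp0M j i h1 h2, ← hp0M j' i' h3 h4, heq]
    subst hj
    refine ⟨rfl, ?_⟩
    have e1 := (hRank j i h1 h2).2
    have e2 := (hRank j i' h3 h4).2
    rw [heq] at e1
    rw [e1] at e2
    omega
  -- extend the acyclic relation to a linear order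
  set r0 : Fin n → Fin n → Prop :=
    fun a b => a = b ∨ Relation.TransGen (GM P k p0) a b with hr0
  haveI hpo : IsPartialOrder (Fin n) r0 := by
    refine { refl := fun a => Or.inl rfl, trans := ?_, antisymm := ?_ }
    · rintro a b c (rfl | h1) (rfl | h2)
      · exact Or.inl rfl
      · exact Or.inr h2
      · exact Or.inr h1
      · exact Or.inr (h1.trans h2)
    · rintro a b (rfl | h1) (h2 | h2)
      · rfl
      · rfl
      · exact h2.symm
      · exact absurd (h1.trans h2) (hAcyc a)
  obtain ⟨s, hslin, hext⟩ := extend_partialOrder r0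
  haveI : IsLinearOrder (Fin n) s := hslin
  haveI : DecidableRel s := fun a b => Classical.propDecidable _
  set σ : List (Fin n) := Finset.sort Finset.univ s with hσ
  have hσlen : σ.length = n := by
    rw [hσ, Finset.length_sort, Finset.card_univ, Fintype.card_fin]
  have hσnd : σ.Nodup := Finset.sort_nodup _ s
  have hσmem : ∀ a : Fin n, a ∈ σ := fun a => (Finset.mem_sort s).2 (Finset.mem_univ a)
  have hσcnt : ∀ a : Fin n, σ.count a = 1 := fun a =>
    List.count_eq_one_of_mem hσnd (hσmem a)
  have hσsorted : σ.Pairwise s := Finset.pairwise_sort _ s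
  have hnoedge : ∀ x y : Fin n, s x y → x ≠ y → ¬ GM P k p0 y x := by
    intro x y hs hne hgm
    have : s y x := hext y x (Or.inr (Relation.TransGen.single hgm))
    exact hne (antisymm hs this)
  -- build the policy and the pick list
  set π : List (Fin n) :=
    ((List.range k).map (fun r => if r % 2 = 0 then σ else σ.reverse)).flatten with hπ
  set ℓ : List (Fin n × ι) :=
    ((List.range k).map (fun r =>
      (if r % 2 = 0 then σ else σ.reverse).map (fun j => (j, p0 j (r+1))))).flatten with hℓ
  have hordmem : ∀ r : ℕ, ∀ a : Fin n, a ∈ (if r % 2 = 0 then σ else σ.reverse) := by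
    intro r a
    split
    · exact hσmem a
    · exact List.mem_reverse.2 (hσmem a)
  have hordnd : ∀ r : ℕ, (if r % 2 = 0 then σ else σ.reverse).Nodup := by
    intro r; split
    · exact hσnd
    · exact List.nodup_reverse.2 hσnd
  have Hfst : ℓ.map Prod.fst = π := by
    rw [hℓ, hπ, List.map_flatten, List.map_map]
    congr 1
    apply List.map_congr_left
    intro r _
    simp [List.map_map, Function.comp_def]
  have hsnd : ℓ.map Prod.snd =
      ((List.range k).map (fun r =>
        (if r % 2 = 0 then σ else σ.reverse).map (fun j => p0 j (r+1)))).flatten := by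
    rw [hℓ, List.map_flatten, List.map_map]
    congr 1
    apply List.map_congr_left
    intro r _
    simp [List.map_map, Function.comp_def]
  have Hnd : (ℓ.map Prod.snd).Nodup := by
    rw [hsnd]
    rw [List.nodup_flatten]
    constructor
    · intro l hl
      rcases List.mem_map.1 hl with ⟨r, hr, rfl⟩
      have hrk : r < k := List.mem_range.1 hr
      refine List.Nodup.map_on ?_ (hordnd r)
      intro x hx y hy hxy
      exact ((hinj x y (r+1) (r+1) (by omega) (by omega) (by omega) (by omega) hxy).1)
    · rw [List.pairwise_map]
      refine (List.pairwise_lt_range (n := k)).imp_of_mem ?_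
      intro r r' hr hr' hrr'
      have hrk : r < k := List.mem_range.1 hr
      have hrk' : r' < k := List.mem_range.1 hr'
      intro o ho ho'
      rcases List.mem_map.1 ho with ⟨j, _, rfl⟩
      rcases List.mem_map.1 ho' with ⟨j', _, heq⟩
      have := (hinj j' j (r'+1) (r+1) (by omega) (by omega) (by omega) (by omega) heq).2
      omega
  have Hfin : (ℓ.map Prod.snd).toFinset = Finset.univ := by
    apply Finset.eq_univ_of_forall
    intro o
    rw [List.mem_toFinset, hsnd, List.mem_flatten]
    have hoA : o ∈ (sl (M o)).toFinset := by
      rw [hsl2 (M o)]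
      exact Finset.mem_filter.2 ⟨Finset.mem_univ o, rfl⟩
    rcases List.mem_iff_getElem.1 (List.mem_toFinset.1 hoA) with ⟨m, hm, hoe⟩
    have hmk : m < k := by rw [hsl3 (M o)] at hm; exact hm
    refine ⟨(if m % 2 = 0 then σ else σ.reverse).map
      (fun j => p0 j (m+1)), List.mem_map.2 ⟨m, List.mem_range.2 hmk, rfl⟩, ?_⟩
    apply List.mem_map.2
    refine ⟨M o, hordmem m _, ?_⟩
    rw [hp0get _ (m+1) (by omega) (by omega) (by rw [hsl3]; omega), List.get_eq_getElem]
    exact hoe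
  have Hpw : ℓ.Pairwise (RR P) := by
    rw [hℓ, List.pairwise_flatten]
    constructor
    · intro l hl
      rcases List.mem_map.1 hl with ⟨r, hr, rfl⟩
      have hrk : r < k := List.mem_range.1 hr
      rw [List.pairwise_map]
      have hpar : (if r % 2 = 0 then σ else σ.reverse).Pairwise
          (fun j j' : Fin n => (r % 2 = 0 → s j j') ∧ (r % 2 ≠ 0 → s j' j)) := by
        split
        · next hpar0 =>
          exact hσsorted.imp (fun h => ⟨fun _ => h, fun hc => absurd hpar0 hc⟩)
        · next hpar0 =>
          exact (List.pairwise_reverse.2 (hσsorted.imp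
            (fun h => ⟨fun hc => absurd hc hpar0, fun _ => h⟩)))
      refine ((hpar.and (hordnd r)).imp ?_)
      rintro j j' ⟨hss, hne⟩
      show (P j).lt (p0 j' (r+1)) (p0 j (r+1))
      have hp0ne : p0 j (r+1) ≠ p0 j' (r+1) := by
        intro he
        exact hne (hinj j j' (r+1) (r+1) (by omega) (by omega) (by omega) (by omega) he).1
      rcases LO.tot (L := P j) (p0 j' (r+1)) (p0 j (r+1)) with h | h | h
      · exact h
      · exact absurd h.symm hp0ne
      · exfalso
        by_cases hpar0 : r % 2 = 0
        · -- odd round i = r+1, edge j' → j in GM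
          exact hnoedge j j' (hss.1 hpar0) hne
            (Or.inl ⟨r+1, by omega, by omega, by omega, h⟩)
        · -- even round, j before j' in σ.reverse means s j' j; edge j → j' in GM
          exact hnoedge j' j (hss.2 hpar0) (Ne.symm hne)
            (Or.inr ⟨r+1, by omega, by omega, by omega, h⟩)
    · rw [List.pairwise_map]
      refine (List.pairwise_lt_range (n := k)).imp_of_mem ?_
      intro r r' hr hr' hrr'
      have hrk : r < k := List.mem_range.1 hr
      have hrk' : r' < k := List.mem_range.1 hr'
      intro x hx y hy
      rcases List.mem_map.1 hx with ⟨j, _, rfl⟩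
      rcases List.mem_map.1 hy with ⟨j', _, rfl⟩
      exact hC3 (r+1) (r'+1) (by omega) (by omega) (by omega) j j'
  have hπcard : π.length = (Finset.univ : Finset ι).card := by
    have := congrArg List.length Hfst
    rw [List.length_map] at this
    have h2 := congrArg List.length (congrArg (List.map Prod.snd) (rfl : ℓ = ℓ))
    have h3 : (ℓ.map Prod.snd).length = (Finset.univ : Finset ι).card := by
      rw [← List.toFinset_card_of_nodup Hnd, Hfin]
    rw [← this, ← h3]
    simp [List.length_map]
  have hseq : seqAlloc P π Finset.univ = ℓ := sa_eq P ℓ π Finset.univ Hfst Hnd Hfin Hpw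
  refine ⟨π, ⟨σ, hσlen, hσcnt, hπ⟩, ?_⟩
  intro o
  rw [hseq, hℓ, List.mem_flatten]
  have hoA : o ∈ (sl (M o)).toFinset := by
    rw [hsl2 (M o)]
    exact Finset.mem_filter.2 ⟨Finset.mem_univ o, rfl⟩
  rcases List.mem_iff_getElem.1 (List.mem_toFinset.1 hoA) with ⟨m, hm, hoe⟩
  have hmk : m < k := by rw [hsl3 (M o)] at hm; exact hm
  refine ⟨(if m % 2 = 0 then σ else σ.reverse).map
    (fun j => (j, p0 j (m+1))), List.mem_map.2 ⟨m, List.mem_range.2 hmk, rfl⟩, ?_⟩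
  apply List.mem_map.2
  refine ⟨M o, hordmem m _, ?_⟩
  have : p0 (M o) (m+1) = o := by
    rw [hp0get _ (m+1) (by omega) (by omega) (by rw [hsl3]; omega)]
    rw [List.get_eq_getElem]
    exact hoe
  rw [this]

/-- An allocation `M` is the outcome of some balanced alternation policy if
and only if `M` is Pareto optimal, balanced, satisfies Condition 3, and the directed
graph `G_M` contains no cycle. -/
theorem possible_assignment_balanced_alternation
    {ι : Type} [Fintype ι] [DecidableEq ι] {n k : ℕ} (hn : 0 < n) (hk : 1 ≤ k)
    (hcard : Fintype.card ι = k * n)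
    (P : Fin n → LinearOrder ι) (M : ι → Fin n) :
    (∃ π : List (Fin n), BalAlt n k π ∧ IsOutcome P π M) ↔
      ParetoOptimal P M ∧ BalancedAlloc k M ∧
        ∀ p : Fin n → ℕ → ι, IsRankingOf P k M p →
          Cond3 P k p ∧ ∀ a : Fin n, ¬ Relation.TransGen (GM P k p) a a := by
  constructor
  · rintro ⟨π, hBA, hOut⟩
    exact forward_dir hn hk hcard P M π hBA hOut
  · rintro ⟨hPO, hBal, hAll⟩
    exact converse_dir hn hk hcard P M hBal hAll
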